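/- Let S and R be commutative rings, π : S → R a surjective ring homomorphism whose kernel I satisfies I² = 0 and I = (t) for some t ∈ S, and n ≥ 1. Let π* : GL_n(S) → GL_n(R) be the induced map on invertible matrices. Then: (i) for every A ∈ M_n(S), the matrix 1 + t·A is invertible with inverse 1 − t·A, and it lies in ker π*; (ii) (1 + t·A)(1 + t·B) = 1 + t·(A + B) for all A, B ∈ M_n(S), so the map A ↦ 1 + t·A is a group homomorphism from (M_n(S), +) to ker π*; (iii) every element of ker π* has the form 1 + t·A for some A ∈ M_n(S); in particular ker π* is an abelian group. -/

import Mathlib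

theorem stmt_2 {S R : Type*} [CommRing S] [CommRing R] (π : S →+* R)
    (hsurj : Function.Surjective π) (t : S)
    (hker : RingHom.ker π = Ideal.span {t})
    (hsq : (RingHom.ker π) ^ 2 = ⊥)
    (n : ℕ) (hn : 1 ≤ n) :
    (∀ A : Matrix (Fin n) (Fin n) S,
      (1 + t • A) * (1 - t • A) = 1 ∧ (1 - t • A) * (1 + t • A) = 1 ∧
      π.mapMatrix (1 + t • A) = 1) ∧
    (∀ A B : Matrix (Fin n) (Fin n) S,
      (1 + t • A) * (1 + t • B) = 1 + t • (A + B)) ∧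
    (∀ u : Matrix.GeneralLinearGroup (Fin n) S,
      Units.map π.mapMatrix.toMonoidHom u = 1 →
      ∃ A : Matrix (Fin n) (Fin n) S, (u : Matrix (Fin n) (Fin n) S) = 1 + t • A) ∧
    (∀ u v : Matrix.GeneralLinearGroup (Fin n) S,
      Units.map π.mapMatrix.toMonoidHom u = 1 → Units.map π.mapMatrix.toMonoidHom v = 1 →
      u * v = v * u) := by
  have htmem : t ∈ RingHom.ker π := by
    rw [hker]; exact Ideal.subset_span rfl
  have hπt : π t = 0 := htmem
  have htt : t * t = 0 := by
    have : t * t ∈ (RingHom.ker π) ^ 2 := by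
      rw [pow_two]; exact Ideal.mul_mem_mul htmem htmem
    rw [hsq] at this
    exact Ideal.mem_bot.mp this
  have hAB : ∀ A B : Matrix (Fin n) (Fin n) S, (t • A) * (t • B) = 0 := by
    intro A B
    rw [Matrix.smul_mul, Matrix.mul_smul, smul_smul, htt, zero_smul]
  have hprod : ∀ A B : Matrix (Fin n) (Fin n) S,
      (1 + t • A) * (1 + t • B) = 1 + t • (A + B) := by
    intro A B
    rw [add_mul, one_mul, mul_add, mul_one, hAB, add_zero, smul_add]
    abel
  have hmap : ∀ A : Matrix (Fin n) (Fin n) S, π.mapMatrix (1 + t • A) = 1 := by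
    intro A
    ext i j
    simp [Matrix.one_apply, Matrix.add_apply, hπt, apply_ite π]
  have hker3 : ∀ u : Matrix.GeneralLinearGroup (Fin n) S,
      Units.map π.mapMatrix.toMonoidHom u = 1 →
      ∃ A : Matrix (Fin n) (Fin n) S, (u : Matrix (Fin n) (Fin n) S) = 1 + t • A := by
    intro u hu
    have hmat : π.mapMatrix (u : Matrix (Fin n) (Fin n) S) = 1 := congrArg Units.val hu
    have hentry : ∀ i j, (u : Matrix (Fin n) (Fin n) S) i j
        - (1 : Matrix (Fin n) (Fin n) S) i j ∈ Ideal.span {t} := by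
      intro i j
      rw [← hker]
      have h1 : π ((u : Matrix (Fin n) (Fin n) S) i j) = (1 : Matrix (Fin n) (Fin n) R) i j := by
        have := congrFun (congrFun (congrArg (fun M => (M : Matrix (Fin n) (Fin n) R)) hmat) i) j
        simpa using this
      have h2 : π ((1 : Matrix (Fin n) (Fin n) S) i j) = (1 : Matrix (Fin n) (Fin n) R) i j := by
        simp [Matrix.one_apply, apply_ite π]
      simp [RingHom.mem_ker, map_sub, h1, h2]
    have hch : ∀ i j, ∃ a : S, a * t = (u : Matrix (Fin n) (Fin n) S) i j
        - (1 : Matrix (Fin n) (Fin n) S) i j := by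
      intro i j
      exact Ideal.mem_span_singleton'.mp (hentry i j)
    refine ⟨fun i j => (hch i j).choose, ?_⟩
    ext i j
    have := (hch i j).choose_spec
    simp only [Matrix.add_apply, Matrix.smul_apply, Pi.smul_apply, smul_eq_mul]
    change _ = _ + t * (hch i j).choose
    rw [mul_comm t]
    rw [this]
    ring
  refine ⟨fun A => ⟨?_, ?_, hmap A⟩, hprod, hker3, ?_⟩
  · have := hprod A (-A)
    simpa [sub_eq_add_neg, smul_neg] using this
  · have := hprod (-A) A
    simpa [sub_eq_add_neg, smul_neg] using this
  · intro u v hu hv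
    obtain ⟨A, hA⟩ := hker3 u hu
    obtain ⟨B, hB⟩ := hker3 v hv
    apply Units.ext
    rw [Units.val_mul, Units.val_mul, hA, hB, hprod, hprod, add_comm A B]
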